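/- Let π and σ be permutations of {1,...,n} and {1,...,k} respectively (k ≤ n), both avoiding 213 and 231. Then π contains σ as a pattern if and only if the ascent/descent word Φ(σ) of σ occurs as a (not necessarily contiguous) subsequence of the ascent/descent word Φ(π) of π, where Φ(τ) for a permutation τ of length m is the binary word of length m-1 with i-th letter 1 if τ(i) < τ(i+1) and 0 otherwise. -/

import Mathlib

def Contains213 {n : ℕ} (π : Equiv.Perm (Fin n)) : Prop :=
  ∃ i j k : Fin n, i < j ∧ j < k ∧ π j < π i ∧ π i < π k

def Contains231 {n : ℕ} (π : Equiv.Perm (Fin n)) : Prop :=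
  ∃ i j k : Fin n, i < j ∧ j < k ∧ π k < π i ∧ π i < π j

def Av213231 {n : ℕ} (π : Equiv.Perm (Fin n)) : Prop :=
  ¬ Contains213 π ∧ ¬ Contains231 π

/-- `π` contains `σ` as a pattern. -/
def ContainsPat {k n : ℕ} (σ : Equiv.Perm (Fin k)) (π : Equiv.Perm (Fin n)) : Prop :=
  ∃ f : Fin k → Fin n, StrictMono f ∧ ∀ a b : Fin k, σ a < σ b ↔ π (f a) < π (f b)

/-- The ascent/descent word of a permutation of `{1,…,m+1}`. -/
def ascWord {m : ℕ} (τ : Equiv.Perm (Fin (m + 1))) : List Bool :=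
  List.ofFn (fun i : Fin m => decide (τ i.castSucc < τ i.succ))

/-- For `x ≠ y` in a linear order, `x < y` iff `¬ y < x`. -/
lemma lt_flip {α : Type*} [LinearOrder α] (x y : α) (hxy : x ≠ y) :
    x < y ↔ ¬ y < x :=
  ⟨fun h => not_lt.mpr h.le, fun h => (not_lt.mp h).lt_of_ne hxy⟩

/-- Key property of (213,231)-avoiding permutations: whether `π a < π b` (for `a < b`)
depends only on the ascent bit at `a`. -/
lemma av_key {n : ℕ} (π : Equiv.Perm (Fin (n+1))) (hπ : Av213231 π)
    (i : Fin n) (b : Fin (n+1)) (hb : i.castSucc < b) :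
    (π i.castSucc < π b ↔ π i.castSucc < π i.succ) := by
  have hsb : i.succ ≤ b := by
    rw [Fin.le_def]
    rw [Fin.lt_def] at hb
    simp only [Fin.coe_castSucc] at hb
    simp only [Fin.val_succ]
    omega
  rcases eq_or_lt_of_le hsb with rfl | hsb
  · rfl
  constructor
  · intro h
    by_contra h'
    have hne : π i.succ ≠ π i.castSucc := fun e =>
      (Fin.castSucc_lt_succ (i := i)).ne (π.injective e.symm)
    have : π i.succ < π i.castSucc := lt_of_le_of_ne (not_lt.mp h') hne
    exact hπ.1 ⟨i.castSucc, i.succ, b, Fin.castSucc_lt_succ (i := i), hsb, this, h⟩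
  · intro h
    by_contra h'
    have hne : π b ≠ π i.castSucc := fun e => hb.ne' (π.injective e)
    have : π b < π i.castSucc := lt_of_le_of_ne (not_lt.mp h') hne
    exact hπ.2 ⟨i.castSucc, i.succ, b, Fin.castSucc_lt_succ (i := i), hsb, this, h⟩

lemma sublist_ofFn_iff {k n : ℕ} {φ : Fin k → Bool} {ψ : Fin n → Bool} :
    (List.ofFn φ).Sublist (List.ofFn ψ) ↔
      ∃ g : Fin k → Fin n, StrictMono g ∧ ∀ i, ψ (g i) = φ i := by
  rw [List.sublist_iff_exists_fin_orderEmbedding_get_eq]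
  have lφ : (List.ofFn φ).length = k := List.length_ofFn
  have lψ : (List.ofFn ψ).length = n := List.length_ofFn
  constructor
  · rintro ⟨f, hf⟩
    refine ⟨fun i => Fin.cast lψ (f (Fin.cast lφ.symm i)), ?_, ?_⟩
    · intro a b hab
      rw [Fin.lt_def]
      simp only [Fin.coe_cast]
      have : (Fin.cast lφ.symm a : Fin _) < Fin.cast lφ.symm b := by
        rw [Fin.lt_def]; simp only [Fin.coe_cast]; rw [Fin.lt_def] at hab; exact hab
      exact f.strictMono this
    · intro i
      have := hf (Fin.cast lφ.symm i)
      rw [List.get_ofFn, List.get_ofFn] at this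
      convert this.symm using 2 <;> ext <;> simp
  · rintro ⟨g, hg, h⟩
    refine ⟨OrderEmbedding.ofStrictMono
      (fun i => Fin.cast lψ.symm (g (Fin.cast lφ i))) ?_, ?_⟩
    · intro a b hab
      rw [Fin.lt_def]
      simp only [Fin.coe_cast]
      have : (Fin.cast lφ a : Fin k) < Fin.cast lφ b := by
        rw [Fin.lt_def]; simp only [Fin.coe_cast]; rw [Fin.lt_def] at hab; exact hab
      exact hg this
    · intro i
      rw [List.get_ofFn, List.get_ofFn]
      change φ _ = ψ (Fin.cast lψ (Fin.cast lψ.symm (g (Fin.cast lφ i))))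
      rw [← h (Fin.cast lφ i)]
      exact congrArg ψ (by ext; simp)

theorem contains_iff_ascWord_sublist (k n : ℕ) (hkn : k ≤ n)
    (σ : Equiv.Perm (Fin (k + 1))) (π : Equiv.Perm (Fin (n + 1)))
    (hσ : Av213231 σ) (hπ : Av213231 π) :
    ContainsPat σ π ↔ (ascWord σ).Sublist (ascWord π) := by
  unfold ascWord
  rw [sublist_ofFn_iff]
  constructor
  · rintro ⟨f, hf, hiff⟩
    have hlt : ∀ i : Fin k, (f i.castSucc : ℕ) < n := by
      intro i
      have h1 : f i.castSucc < f i.succ := hf (Fin.castSucc_lt_succ (i := i))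
      have h2 : (f i.succ : ℕ) ≤ n := Nat.lt_succ_iff.mp (f i.succ).isLt
      rw [Fin.lt_def] at h1
      omega
    refine ⟨fun i => ⟨(f i.castSucc : ℕ), hlt i⟩, ?_, ?_⟩
    · intro a b hab
      rw [Fin.lt_def]
      have := hf (show a.castSucc < b.castSucc by
        rw [Fin.lt_def]; simpa using hab)
      rw [Fin.lt_def] at this
      exact this
    · intro i
      set g : Fin n := ⟨(f i.castSucc : ℕ), hlt i⟩ with hgdef
      have hcs : g.castSucc = f i.castSucc := by ext; simp [hgdef]
      have h1 : π g.castSucc < π (f i.succ) ↔ π g.castSucc < π g.succ :=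
        av_key π hπ g (f i.succ) (by rw [hcs]; exact hf (Fin.castSucc_lt_succ (i := i)))
      have h2 : σ i.castSucc < σ i.succ ↔ π (f i.castSucc) < π (f i.succ) :=
        hiff i.castSucc i.succ
      simp only [decide_eq_decide]
      rw [← h1, hcs, ← h2]
  · rintro ⟨g, hg, hbit⟩
    rcases Nat.eq_zero_or_pos k with rfl | hk
    · refine ⟨fun _ => 0, ?_, ?_⟩
      · intro a b hab
        exfalso
        have ha := a.isLt
        have hb := b.isLt
        rw [Fin.lt_def] at hab
        omega
      · intro a b
        have : a = b := Fin.ext (by have := a.isLt; have := b.isLt; omega)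
        subst this
        simp
    · have hk1 : k - 1 < k := by omega
      set f : Fin (k+1) → Fin (n+1) := fun i =>
        if h : (i : ℕ) < k then (g ⟨i, h⟩).castSucc else (g ⟨k-1, hk1⟩).succ with hfdef
      have hfeq : ∀ (i : Fin (k+1)) (h : (i : ℕ) < k), f i = (g ⟨i, h⟩).castSucc := by
        intro i h; simp [hfdef, h]
      have hfmono : StrictMono f := by
        intro a b hab
        by_cases hb : (b : ℕ) < k
        · have ha : (a : ℕ) < k := by rw [Fin.lt_def] at hab; omega
          rw [hfeq a ha, hfeq b hb]
          have := hg (show (⟨a, ha⟩ : Fin k) < ⟨b, hb⟩ from hab)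
          rw [Fin.lt_def] at this ⊢
          simpa using this
        · have ha : (a : ℕ) < k := by
            have hbk : (b : ℕ) ≤ k := Nat.lt_succ_iff.mp b.isLt
            rw [Fin.lt_def] at hab
            omega
          rw [hfeq a ha]
          simp only [hfdef, dif_neg hb]
          rw [Fin.castSucc_lt_succ_iff]
          exact hg.monotone (show (⟨a, ha⟩ : Fin k) ≤ ⟨k-1, hk1⟩ by
            rw [Fin.le_def]; simp; omega)
      have main : ∀ a b : Fin (k+1), a < b → (σ a < σ b ↔ π (f a) < π (f b)) := by
        intro a b hab
        have ha : (a : ℕ) < k := by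
          have hbk : (b : ℕ) ≤ k := Nat.lt_succ_iff.mp b.isLt
          rw [Fin.lt_def] at hab
          omega
        have hacs : (⟨a, ha⟩ : Fin k).castSucc = a := by ext; simp
        have hfa : f a = (g ⟨a, ha⟩).castSucc := hfeq a ha
        have h1 := av_key σ hσ ⟨a, ha⟩ b (by rw [hacs]; exact hab)
        have h2 := av_key π hπ (g ⟨a, ha⟩) (f b) (by rw [← hfa]; exact hfmono hab)
        have hb' := hbit ⟨a, ha⟩
        simp only [decide_eq_decide] at hb'
        rw [hfa, h2, hb', ← h1, hacs]
      refine ⟨f, hfmono, ?_⟩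
      intro a b
      rcases lt_trichotomy a b with h | rfl | h
      · exact main a b h
      · simp
      · have hne1 : σ a ≠ σ b := fun e => h.ne' (σ.injective e)
        have hne2 : π (f a) ≠ π (f b) := fun e =>
          h.ne' (hfmono.injective (π.injective e))
        exact (lt_flip _ _ hne1).trans
          ((not_congr (main b a h)).trans (lt_flip _ _ hne2).symm)
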